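/- Let A be an integral domain, ⋆ a star operation of finite type on A, a a nonzero element of A, and ℱ a ⋆-comaximal collection over a of ideals of A. Define 𝔞 := {x ∈ A : x·∏ℱ' ⊆ aA for some finite subcollection ℱ' ⊆ ℱ}. Then for each ⋆-maximal ideal 𝔪 of A: if no member of ℱ is contained in 𝔪, then 𝔞A_𝔪 = aA_𝔪; and if 𝔟₀ is the unique member of ℱ contained in 𝔪, then 𝔞A_𝔪 = a(A : 𝔟₀)A_𝔪. -/

import Mathlib

open scoped nonZeroDivisors Pointwise

/-- A star operation on an integral domain `A` with quotient field `K`: a map on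
(nonzero) fractional ideals satisfying `A^⋆ = A`, `(xI)^⋆ = x·I^⋆`, `I ⊆ I^⋆`,
monotonicity and idempotency. -/
structure StarOperation (A : Type*) [CommRing A] [IsDomain A]
    (K : Type*) [Field K] [Algebra A K] [IsFractionRing A K] where
  star : FractionalIdeal A⁰ K → FractionalIdeal A⁰ K
  star_one : star 1 = 1
  star_smul : ∀ (x : K), x ≠ 0 → ∀ I : FractionalIdeal A⁰ K, I ≠ 0 →
    star (FractionalIdeal.spanSingleton A⁰ x * I) = FractionalIdeal.spanSingleton A⁰ x * star I
  le_star : ∀ I : FractionalIdeal A⁰ K, I ≠ 0 → I ≤ star I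
  mono : ∀ I J : FractionalIdeal A⁰ K, I ≠ 0 → I ≤ J → star I ≤ star J
  star_idem : ∀ I : FractionalIdeal A⁰ K, I ≠ 0 → star (star I) = star I

variable {A : Type*} [CommRing A] [IsDomain A]
  {K : Type*} [Field K] [Algebra A K] [IsFractionRing A K]

/-- `⋆` is of finite type: `I^⋆` is the union of the `J^⋆` over the finitely
generated (nonzero) fractional ideals `J ⊆ I`. -/
def StarOperation.IsFiniteType (s : StarOperation A K) : Prop :=
  ∀ I : FractionalIdeal A⁰ K, I ≠ 0 → ∀ x : K, x ∈ s.star I →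
    ∃ J : FractionalIdeal A⁰ K, J ≠ 0 ∧ J ≤ I ∧ (J : Submodule A K).FG ∧ x ∈ s.star J

/-- A (nonzero, integral) ideal `I` is a `⋆`-ideal if `I^⋆ = I`. -/
def IsStarIdeal (s : StarOperation A K) (I : Ideal A) : Prop :=
  I ≠ 0 ∧ s.star ↑I = (I : FractionalIdeal A⁰ K)

/-- A (nonzero, integral) ideal `I` is `⋆`-finite if `J^⋆ = I^⋆` for some finitely
generated (nonzero) ideal `J`. -/
def IsStarFinite (s : StarOperation A K) (I : Ideal A) : Prop :=
  I ≠ 0 ∧ ∃ J : Ideal A, J ≠ 0 ∧ J.FG ∧ s.star ↑J = s.star (I : FractionalIdeal A⁰ K)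

/-- An ideal of `A` is `⋆`-maximal if it is maximal among proper `⋆`-ideals. -/
def IsStarMaximal (s : StarOperation A K) (M : Ideal A) : Prop :=
  M ≠ ⊤ ∧ IsStarIdeal s M ∧ ∀ J : Ideal A, J ≠ ⊤ → IsStarIdeal s J → M ≤ J → J = M

/-- Property (⋆-c.a.): for every pair of proper ⋆-finite ⋆-ideals `𝔞₁, 𝔞₂` containing
`𝔞`, the ideal `(𝔞₁ + 𝔞₂)^⋆` is proper. -/
def StarCA (s : StarOperation A K) (𝔞 : Ideal A) : Prop :=
  ∀ 𝔞₁ 𝔞₂ : Ideal A, 𝔞 ≤ 𝔞₁ → 𝔞 ≤ 𝔞₂ →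
    𝔞₁ ≠ ⊤ → IsStarIdeal s 𝔞₁ → IsStarFinite s 𝔞₁ →
    𝔞₂ ≠ ⊤ → IsStarIdeal s 𝔞₂ → IsStarFinite s 𝔞₂ →
    s.star ↑(𝔞₁ + 𝔞₂) ≠ 1

/-- `ℱ` is a ⋆-comaximal collection over `a`: `a` lies in every member and
`(𝔞₁ + 𝔞₂)^⋆ = A` for all distinct members. -/
def IsStarComaximalOver (s : StarOperation A K) (a : A) (F : Set (Ideal A)) : Prop :=
  (∀ I ∈ F, a ∈ I) ∧ ∀ I ∈ F, ∀ J ∈ F, I ≠ J → s.star ↑(I + J) = 1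

/-- `(Σ')^⋆_a`: the ⋆-comaximal collections over `a` of proper ⋆-finite ⋆-ideals. -/
def SigmaP (s : StarOperation A K) (a : A) : Set (Set (Ideal A)) :=
  {F | IsStarComaximalOver s a F ∧ ∀ I ∈ F, I ≠ ⊤ ∧ IsStarIdeal s I ∧ IsStarFinite s I}

/-- `Σ^⋆_a`: members of `(Σ')^⋆_a` all of whose ideals satisfy (⋆-c.a.). -/
def SigmaCA (s : StarOperation A K) (a : A) : Set (Set (Ideal A)) :=
  {F | F ∈ SigmaP s a ∧ ∀ I ∈ F, StarCA s I}

/-- The set `𝔞 = {x ∈ A : x·∏ℱ' ⊆ aA for some finite subcollection ℱ' ⊆ ℱ}`. -/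
def prodSet {A : Type*} [CommRing A] (F : Set (Ideal A)) (a : A) : Set A :=
  {x : A | ∃ G : Finset (Ideal A), ↑G ⊆ F ∧
    Ideal.span {x} * (G.prod id) ≤ Ideal.span {a}}

/-- Let `⋆` be a finite type star operation on `A`, `a ≠ 0`, `ℱ` a ⋆-comaximal
collection over `a` and `𝔞 = {x : x·∏ℱ' ⊆ aA for some finite ℱ' ⊆ ℱ}`. For each
⋆-maximal (prime) ideal `𝔪` of `A`: if no member of `ℱ` is contained in `𝔪` then
`𝔞A_𝔪 = aA_𝔪`, and if `𝔟₀` is the unique member of `ℱ` contained in `𝔪` then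
`𝔞A_𝔪 = a(A : 𝔟₀)A_𝔪` (`A_𝔪` realized as a subalgebra of `K`). -/
lemma aux_inv_mem (𝔪 : Ideal A) [𝔪.IsPrime] {t : A} (ht : t ∈ 𝔪.primeCompl) :
    (algebraMap A K t)⁻¹ ∈
      Localization.subalgebra K 𝔪.primeCompl 𝔪.primeCompl_le_nonZeroDivisors := by
  refine ⟨1, t, ht, ?_⟩
  rw [IsFractionRing.mk'_eq_div, map_one, one_div]

lemma aux_exists_prod (𝔪 : Ideal A) [𝔪.IsPrime] (G : Finset (Ideal A))
    (h : ∀ 𝔟 ∈ G, ¬𝔟 ≤ 𝔪) : ∃ t : A, t ∈ G.prod id ∧ t ∉ 𝔪 := by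
  classical
  induction G using Finset.induction_on with
  | empty =>
      refine ⟨1, by simp [Ideal.one_eq_top], fun h1 => ?_⟩
      exact ‹𝔪.IsPrime›.ne_top (Ideal.eq_top_iff_one 𝔪 |>.2 h1)
  | @insert 𝔟 G hnm ih =>
      obtain ⟨t, htp, htm⟩ := ih fun b hb => h b (Finset.mem_insert_of_mem hb)
      obtain ⟨sb, hsb, hsbm⟩ := SetLike.not_le_iff_exists.1 (h 𝔟 (Finset.mem_insert_self _ _))
      refine ⟨sb * t, ?_, fun hc => ?_⟩
      · rw [Finset.prod_insert hnm]
        exact Ideal.mul_mem_mul hsb htp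
      · rcases ‹𝔪.IsPrime›.mem_or_mem hc with h' | h'
        exacts [hsbm h', htm h']


theorem prodSet_localization_at_star_maximal
    (s : StarOperation A K) (hs : s.IsFiniteType) (a : A) (ha : a ≠ 0)
    (F : Set (Ideal A)) (hcom : IsStarComaximalOver s a F)
    (𝔪 : Ideal A) [𝔪.IsPrime] (h𝔪 : IsStarMaximal s 𝔪) :
    ((∀ 𝔟 ∈ F, ¬(𝔟 ≤ 𝔪)) →
      Submodule.span
          (Localization.subalgebra K 𝔪.primeCompl 𝔪.primeCompl_le_nonZeroDivisors)
          (algebraMap A K '' prodSet F a) =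
        Submodule.span
          (Localization.subalgebra K 𝔪.primeCompl 𝔪.primeCompl_le_nonZeroDivisors)
          {algebraMap A K a}) ∧
    (∀ 𝔟₀ ∈ F, 𝔟₀ ≤ 𝔪 → (∀ 𝔟 ∈ F, 𝔟 ≤ 𝔪 → 𝔟 = 𝔟₀) →
      Submodule.span
          (Localization.subalgebra K 𝔪.primeCompl 𝔪.primeCompl_le_nonZeroDivisors)
          (algebraMap A K '' prodSet F a) =
        Submodule.span
          (Localization.subalgebra K 𝔪.primeCompl 𝔪.primeCompl_le_nonZeroDivisors)
          ((algebraMap A K a) •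
            ((1 / (𝔟₀ : FractionalIdeal A⁰ K) : FractionalIdeal A⁰ K) : Set K))) := by
  classical
  set R := Localization.subalgebra K 𝔪.primeCompl 𝔪.primeCompl_le_nonZeroDivisors with hR
  have finj : Function.Injective (algebraMap A K) := IsFractionRing.injective A K
  have hfa : algebraMap A K a ≠ 0 := fun h => ha (finj (by simpa using h))
  have ha𝔞 : a ∈ prodSet F a := ⟨∅, by simp, by simp⟩
  have hne : ∀ {t : A}, t ∉ 𝔪 → algebraMap A K t ≠ 0 := by
    intro t ht h
    exact ht (by simpa [finj (show algebraMap A K t = algebraMap A K 0 by simpa using h)]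
      using 𝔪.zero_mem)
  constructor
  · intro hnone
    apply le_antisymm
    · rw [Submodule.span_le]
      rintro _ ⟨x, ⟨G, hGF, hle⟩, rfl⟩
      obtain ⟨t, htp, htm⟩ := aux_exists_prod 𝔪 G fun 𝔟 h𝔟 => hnone 𝔟 (hGF h𝔟)
      have hxt : x * t ∈ Ideal.span {a} :=
        hle (Ideal.mul_mem_mul (Ideal.mem_span_singleton_self x) htp)
      obtain ⟨c, hc⟩ := Ideal.mem_span_singleton'.1 hxt
      have key : algebraMap A K c * algebraMap A K a = algebraMap A K x * algebraMap A K t := by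
        rw [← map_mul, ← map_mul, hc]
      refine Submodule.mem_span_singleton.2
        ⟨⟨algebraMap A K c * (algebraMap A K t)⁻¹,
          mul_mem (Subalgebra.algebraMap_mem R c) (aux_inv_mem 𝔪 htm)⟩, ?_⟩
      show (algebraMap A K c * (algebraMap A K t)⁻¹) * algebraMap A K a = algebraMap A K x
      field_simp [hne htm]
      linear_combination key
    · exact Submodule.span_mono (Set.singleton_subset_iff.2 ⟨a, ha𝔞, rfl⟩)
  · intro 𝔟₀ h𝔟₀F h𝔟₀𝔪 huniq
    have ha𝔟₀ : a ∈ 𝔟₀ := hcom.1 _ h𝔟₀F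
    have h𝔟₀0 : (𝔟₀ : FractionalIdeal A⁰ K) ≠ 0 := by
      rw [FractionalIdeal.coeIdeal_ne_zero' le_rfl]
      exact fun h => ha (by simpa [h] using ha𝔟₀)
    have hdiv : ∀ y : K, y ∈ (1 / (𝔟₀ : FractionalIdeal A⁰ K)) ↔
        ∀ b ∈ 𝔟₀, y * algebraMap A K b ∈ (1 : FractionalIdeal A⁰ K) := by
      intro y
      rw [FractionalIdeal.mem_div_iff_of_ne_zero h𝔟₀0]
      constructor
      · intro h b hb
        exact h _ (FractionalIdeal.mem_coeIdeal_of_mem A⁰ hb)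
      · rintro h w hw
        obtain ⟨b, hb, rfl⟩ := (FractionalIdeal.mem_coeIdeal A⁰).1 hw
        exact h b hb
    apply le_antisymm
    · rw [Submodule.span_le]
      rintro _ ⟨x, ⟨G, hGF, hle⟩, rfl⟩
      have hG' : ∀ 𝔟 ∈ G.erase 𝔟₀, ¬𝔟 ≤ 𝔪 := fun 𝔟 h𝔟 hle𝔪 =>
        (Finset.ne_of_mem_erase h𝔟) (huniq 𝔟 (hGF (Finset.mem_of_mem_erase h𝔟)) hle𝔪)
      obtain ⟨t, htp, htm⟩ := aux_exists_prod 𝔪 _ hG'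
      have hxtb : ∀ b ∈ 𝔟₀, x * t * b ∈ Ideal.span {a} := by
        intro b hb
        by_cases hmem : 𝔟₀ ∈ G
        · have hbt : b * t ∈ G.prod id := by
            rw [← Finset.mul_prod_erase G id hmem]
            exact Ideal.mul_mem_mul hb htp
          have := hle (Ideal.mul_mem_mul (Ideal.mem_span_singleton_self x) hbt)
          convert this using 1
          ring
        · have hGe : G.erase 𝔟₀ = G := Finset.erase_eq_of_notMem hmem
          exact Ideal.mul_mem_right b _
            (hle (Ideal.mul_mem_mul (Ideal.mem_span_singleton_self x) (hGe ▸ htp)))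
      set y : K := algebraMap A K x * algebraMap A K t * (algebraMap A K a)⁻¹ with hy_def
      have hy : y ∈ 1 / (𝔟₀ : FractionalIdeal A⁰ K) := by
        rw [hdiv]
        intro b hb
        obtain ⟨d, hd⟩ := Ideal.mem_span_singleton'.1 (hxtb b hb)
        refine FractionalIdeal.mem_one_iff A⁰ |>.2 ⟨d, ?_⟩
        have key : algebraMap A K d * algebraMap A K a
            = algebraMap A K x * algebraMap A K t * algebraMap A K b := by
          rw [← map_mul, ← map_mul, ← map_mul, hd]
        rw [hy_def]
        field_simp
        linear_combination key
      have hmul : algebraMap A K x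
          = (algebraMap A K t)⁻¹ * (algebraMap A K a * y) := by
        rw [hy_def]
        field_simp [hne htm]
      rw [SetLike.mem_coe, hmul]
      have : algebraMap A K a * y ∈
          (algebraMap A K a) • ((1 / (𝔟₀ : FractionalIdeal A⁰ K) : FractionalIdeal A⁰ K) : Set K) := by
        rw [← smul_eq_mul]
        exact Set.smul_mem_smul_set hy
      exact Submodule.smul_mem _ (⟨(algebraMap A K t)⁻¹, aux_inv_mem 𝔪 htm⟩ : R)
        (Submodule.subset_span this)
    · rw [Submodule.span_le]
      rintro z hz
      obtain ⟨y, hy, rfl⟩ := Set.mem_smul_set.1 hz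
      have hy' : y ∈ 1 / (𝔟₀ : FractionalIdeal A⁰ K) := hy
      obtain ⟨c, hc⟩ := FractionalIdeal.mem_one_iff A⁰ |>.1 ((hdiv y).1 hy' a ha𝔟₀)
      have hc𝔞 : c ∈ prodSet F a := by
        refine ⟨{𝔟₀}, by simpa using h𝔟₀F, ?_⟩
        rw [Finset.prod_singleton]
        rw [Ideal.mul_le]
        intro r hr b hb
        obtain ⟨e, he⟩ := Ideal.mem_span_singleton'.1 hr
        obtain ⟨d, hd⟩ := FractionalIdeal.mem_one_iff A⁰ |>.1 ((hdiv y).1 hy' b hb)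
        have hcb : c * b = a * d := by
          apply finj
          rw [map_mul, map_mul, hc, hd]
          ring
        rw [← he, mul_assoc, hcb]
        exact Ideal.mul_mem_left _ _ (Ideal.mem_span_singleton'.2 ⟨d, mul_comm d a⟩)
      have : algebraMap A K a • y = algebraMap A K c := by
        rw [smul_eq_mul, hc]; ring
      rw [SetLike.mem_coe, this]
      exact Submodule.subset_span ⟨c, hc𝔞, rfl⟩
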